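/- If A is a Gδσ subset of Cantor space 2^ℕ (i.e., A is a countable union of Gδ sets), then either A is countable or A contains a subset homeomorphic to 2^ℕ. -/

import Mathlib

/-- Any uncountable Borel subset of a Polish space admits a continuous injection
from Cantor space. -/
lemma aux_borel_cantor_inj {α : Type*} [TopologicalSpace α] [PolishSpace α]
    [MeasurableSpace α] [BorelSpace α] {s : Set α} (hs : MeasurableSet s)
    (h : ¬ s.Countable) :
    ∃ f : (ℕ → Bool) → α, Set.range f ⊆ s ∧ Continuous f ∧ Function.Injective f := by
  obtain ⟨t', ht'le, ht'polish, ht'closed, -⟩ := hs.isClopenable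
  obtain ⟨f, hrange, hcont, hinj⟩ :=
    @IsClosed.exists_nat_bool_injection_of_not_countable α t' ht'polish s ht'closed h
  refine ⟨f, hrange, ?_, hinj⟩
  exact continuous_iff_coinduced_le.mpr
    (le_trans ((continuous_iff_coinduced_le (t₂ := t')).mp hcont) ht'le)

/-- If `A ⊆ 2^ℕ` is a Gδσ set (a countable union of Gδ sets), then either `A`
is countable or `A` contains a subset homeomorphic to Cantor space `2^ℕ`. -/
theorem gdeltasigma_countable_or_perfect_subset (A : Set (ℕ → Bool))
    (hA : ∃ H : ℕ → Set (ℕ → Bool), (∀ n, IsGδ (H n)) ∧ A = ⋃ n, H n) :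
    A.Countable ∨ ∃ P : Set (ℕ → Bool), P ⊆ A ∧ Nonempty (↥P ≃ₜ (ℕ → Bool)) := by
  obtain ⟨H, hGδ, rfl⟩ := hA
  by_cases hcnt : (⋃ n, H n).Countable
  · exact Or.inl hcnt
  · right
    have : ∃ n, ¬ (H n).Countable := by
      by_contra h
      push_neg at h
      exact hcnt (Set.countable_iUnion h)
    obtain ⟨n, hn⟩ := this
    haveI : TopologicalSpace.IsCompletelyMetrizableSpace (ℕ → Bool) := inferInstance
    obtain ⟨f, hrange, hcont, hinj⟩ := aux_borel_cantor_inj (hGδ n).measurableSet hn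
    have hemb : Topology.IsClosedEmbedding f := hcont.isClosedEmbedding hinj
    refine ⟨Set.range f, hrange.trans (Set.subset_iUnion H n), ?_⟩
    exact ⟨(Topology.IsEmbedding.toHomeomorph hemb.isEmbedding).symm⟩
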